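/- arXiv:2501.03439 — 5 statements merged into one kernel-verified Lean document; each statement's English description precedes it below -/
import Mathlib

section
/- Let J be a finite directed graph with maximum out-degree D, and suppose D > m(J), where m(J) = max over nonempty subgraphs J' of e(J')/v(J') (ignoring orientations). Then the edge set of J can be partitioned into two spanning subdigraphs J' and F such that the maximum out-degree of J' is at most D-1, the maximum out-degree of F is at most 1, and the maximum total degree (in-degree plus out-degree) of F is at most ⌈D/(D - m(J))⌉. -/
open Finset
open scoped Classical

/-- Out-degree of `v` in the digraph with edge set `E`. -/
noncomputable def outDeg {V : Type*} (E : Finset (V × V)) (v : V) : ℕ :=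
  (E.filter (fun e => e.1 = v)).card

/-- In-degree of `v` in the digraph with edge set `E`. -/
noncomputable def inDeg {V : Type*} (E : Finset (V × V)) (v : V) : ℕ :=
  (E.filter (fun e => e.2 = v)).card

/-- Number of edges of the digraph `E` lying inside the vertex set `S`. -/
noncomputable def dEdgesIn {V : Type*} (E : Finset (V × V)) (S : Finset V) : ℕ :=
  (E.filter (fun e => e.1 ∈ S ∧ e.2 ∈ S)).card

/-- The maximum density `m(J)` of a finite digraph, computed on the underlying graph. -/
noncomputable def dMaxDensity {V : Type*} [Fintype V] [Nonempty V] (E : Finset (V × V)) : ℝ :=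
  ((Finset.univ : Finset (Finset V)).filter (fun S => S.Nonempty)).sup'
    ⟨Finset.univ, by simp [Finset.univ_nonempty]⟩
    (fun S => (dEdgesIn E S : ℝ) / (S.card : ℝ))

lemma dMaxDensity_ge {V : Type*} [Fintype V] [Nonempty V] (E : Finset (V × V))
    (T : Finset V) (hT : T.Nonempty) :
    (dEdgesIn E T : ℝ) / (T.card : ℝ) ≤ dMaxDensity E := by
  unfold dMaxDensity
  exact Finset.le_sup' (f := fun S : Finset V => (dEdgesIn E S : ℝ) / (S.card : ℝ))
    (Finset.mem_filter.mpr ⟨Finset.mem_univ T, hT⟩)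

/-- directed decomposition lemma. If `J` is a finite digraph with maximum
out-degree `D > m(J)`, then `E(J)` decomposes as `J' ∪ F` with `Δ⁺(J') ≤ D - 1`, `Δ⁺(F) ≤ 1`,
and the maximum total degree of `F` at most `⌈D / (D - m(J))⌉`. -/
theorem stmt_0 {V : Type*} [Fintype V] [Nonempty V] (E : Finset (V × V)) (D : ℕ)
    (hD : ∀ v, outDeg E v ≤ D) (hDex : ∃ v, outDeg E v = D)
    (hm : dMaxDensity E < (D : ℝ)) :
    ∃ E' F : Finset (V × V), Disjoint E' F ∧ E' ∪ F = E ∧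
      (∀ v, outDeg E' v ≤ D - 1) ∧ (∀ v, outDeg F v ≤ 1) ∧
      (∀ v, outDeg F v + inDeg F v ≤ ⌈(D : ℝ) / ((D : ℝ) - dMaxDensity E)⌉₊) := by
  set m : ℝ := dMaxDensity E with hm_def
  have hm0 : 0 ≤ m := by
    have h := dMaxDensity_ge E Finset.univ Finset.univ_nonempty
    have h0 : (0 : ℝ) ≤ (dEdgesIn E (Finset.univ : Finset V) : ℝ) /
        ((Finset.univ : Finset V).card : ℝ) := by positivity
    exact le_trans h0 h
  have hDpos : (0 : ℝ) < (D : ℝ) := lt_of_le_of_lt hm0 hm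
  have hDm : (0 : ℝ) < (D : ℝ) - m := sub_pos.2 hm
  set k : ℕ := ⌈(D : ℝ) / ((D : ℝ) - m)⌉₊ with hk_def
  have hk1 : 1 ≤ k := by
    have : (0 : ℝ) < (D : ℝ) / ((D : ℝ) - m) := div_pos hDpos hDm
    exact Nat.one_le_iff_ne_zero.mpr (Nat.ceil_pos.2 this).ne'
  set c : ℕ := k - 1 with hc_def
  have hck : (c : ℝ) = (k : ℝ) - 1 := by
    rw [hc_def]
    push_cast [hk1]
    ring
  have hc : m / ((D : ℝ) - m) ≤ (c : ℝ) := by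
    have h1 : (D : ℝ) / ((D : ℝ) - m) ≤ (k : ℝ) := Nat.le_ceil _
    rw [div_le_iff₀ hDm] at h1 ⊢
    rw [hck]
    nlinarith
  have hc' : m ≤ (c : ℝ) * ((D : ℝ) - m) := (div_le_iff₀ hDm).mp hc
  -- density bound for all nonempty T
  have hsup : ∀ T : Finset V, T.Nonempty → (dEdgesIn E T : ℝ) ≤ m * T.card := by
    intro T hT
    have h := dMaxDensity_ge E T hT
    have hTc : (0 : ℝ) < (T.card : ℝ) := by exact_mod_cast Finset.card_pos.mpr hT
    rw [div_le_iff₀ hTc] at h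
    linarith
  -- set of out-neighbours
  set Nv : V → Finset V := fun v => (E.filter (fun e => e.1 = v)).image Prod.snd with hNv
  -- Hall setup
  set ι : Type _ := {v : V // outDeg E v = D} with hι
  set t : ι → Finset (V × Fin c) := fun v => Nv v.1 ×ˢ Finset.univ with ht
  have hall : ∀ s : Finset ι, s.card ≤ (s.biUnion t).card := by
    intro s
    rcases s.eq_empty_or_nonempty with rfl | hs
    · simp
    set S' : Finset V := s.image (fun v : ι => v.1) with hS'
    have hS'card : S'.card = s.card :=
      Finset.card_image_of_injective _ Subtype.val_injective
    set NU : Finset V := s.biUnion (fun v => Nv v.1) with hNU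
    have hbi : s.biUnion t = NU ×ˢ (Finset.univ : Finset (Fin c)) := by
      ext ⟨w, i⟩
      simp only [ht, hNU, Finset.mem_biUnion, Finset.mem_product, Finset.mem_univ, and_true]
    have hcard : (s.biUnion t).card = NU.card * c := by
      rw [hbi, Finset.card_product, Finset.card_univ, Fintype.card_fin]
    set T : Finset V := S' ∪ NU with hT
    have hTne : T.Nonempty := Finset.Nonempty.inl (hs.image _)
    -- edges with tail in S' are inside T
    have hsub : E.filter (fun e => e.1 ∈ S') ⊆ E.filter (fun e => e.1 ∈ T ∧ e.2 ∈ T) := by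
      intro e he
      rw [Finset.mem_filter] at he ⊢
      obtain ⟨heE, heS⟩ := he
      refine ⟨heE, Finset.mem_union_left _ heS, Finset.mem_union_right _ ?_⟩
      rw [hS', Finset.mem_image] at heS
      obtain ⟨u, hu, hue⟩ := heS
      rw [hNU, Finset.mem_biUnion]
      refine ⟨u, hu, ?_⟩
      rw [hNv]
      simp only [Finset.mem_image, Finset.mem_filter]
      exact ⟨e, ⟨heE, hue.symm⟩, rfl⟩
    have hsplit : E.filter (fun e => e.1 ∈ S') =
        S'.biUnion (fun v => E.filter (fun e => e.1 = v)) := by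
      ext e
      simp only [Finset.mem_filter, Finset.mem_biUnion]
      constructor
      · rintro ⟨he, hs'⟩; exact ⟨e.1, hs', he, rfl⟩
      · rintro ⟨v, hv, he, rfl⟩; exact ⟨he, hv⟩
    have hdisj : ∀ x ∈ S', ∀ y ∈ S', x ≠ y →
        Disjoint (E.filter (fun e => e.1 = x)) (E.filter (fun e => e.1 = y)) := by
      intro x _ y _ hxy
      rw [Finset.disjoint_left]
      intro e he he'
      rw [Finset.mem_filter] at he he'
      exact hxy (he.2 ▸ he'.2.symm ▸ rfl)
    have hcount : (E.filter (fun e => e.1 ∈ S')).card = D * S'.card := by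
      rw [hsplit, Finset.card_biUnion hdisj]
      have : ∀ v ∈ S', (E.filter (fun e => e.1 = v)).card = D := by
        intro v hv
        rw [hS', Finset.mem_image] at hv
        obtain ⟨u, _, rfl⟩ := hv
        exact u.2
      rw [Finset.sum_congr rfl this, Finset.sum_const, smul_eq_mul, mul_comm]
    have h1 : D * S'.card ≤ dEdgesIn E T := by
      rw [dEdgesIn, ← hcount]
      exact Finset.card_le_card hsub
    have h2 : (dEdgesIn E T : ℝ) ≤ m * T.card := hsup T hTne
    have h3 : (T.card : ℝ) ≤ (S'.card : ℝ) + (NU.card : ℝ) := by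
      exact_mod_cast Finset.card_union_le S' NU
    have hbig : (D : ℝ) * (S'.card : ℝ) ≤ m * ((S'.card : ℝ) + (NU.card : ℝ)) := by
      have h1' : (D : ℝ) * (S'.card : ℝ) ≤ (dEdgesIn E T : ℝ) := by exact_mod_cast h1
      have := mul_le_mul_of_nonneg_left h3 hm0
      linarith
    rw [hcard]
    have goalR : (s.card : ℝ) ≤ (NU.card : ℝ) * (c : ℝ) := by
      have hs' : (S'.card : ℝ) = (s.card : ℝ) := by exact_mod_cast hS'card
      have hNU0 : (0 : ℝ) ≤ (NU.card : ℝ) := Nat.cast_nonneg _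
      have h5 : m * (NU.card : ℝ) ≤ (c : ℝ) * ((D : ℝ) - m) * (NU.card : ℝ) :=
        mul_le_mul_of_nonneg_right hc' hNU0
      have h6 : ((D : ℝ) - m) * (s.card : ℝ) ≤ ((D : ℝ) - m) * ((NU.card : ℝ) * (c : ℝ)) := by
        have e1 : (c : ℝ) * ((D : ℝ) - m) * (NU.card : ℝ) =
            ((D : ℝ) - m) * ((NU.card : ℝ) * (c : ℝ)) := by ring
        rw [e1] at h5
        rw [hs'] at hbig
        linarith
      exact le_of_mul_le_mul_left h6 hDm
    exact_mod_cast goalR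
  obtain ⟨f, hfinj, hft⟩ := (Finset.all_card_le_biUnion_card_iff_exists_injective t).mp hall
  set F : Finset (V × V) :=
    Finset.image (fun v : ι => ((v.1 : V), (f v).1)) Finset.univ with hF
  have hFE : F ⊆ E := by
    intro e he
    rw [hF, Finset.mem_image] at he
    obtain ⟨v, _, rfl⟩ := he
    have hv := hft v
    rw [ht, Finset.mem_product] at hv
    have := hv.1
    rw [hNv, Finset.mem_image] at this
    obtain ⟨e', he', he'2⟩ := this
    rw [Finset.mem_filter] at he'
    have : e' = (v.1, (f v).1) := by
      rw [Prod.ext_iff]; exact ⟨he'.2, he'2⟩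
    rw [← this]; exact he'.1
  refine ⟨E \ F, F, Finset.sdiff_disjoint, Finset.sdiff_union_of_subset hFE, ?_, ?_, ?_⟩
  · -- out-degree of E \ F
    intro v
    by_cases h : outDeg E v = D
    · set u : ι := ⟨v, h⟩ with hu
      set e₀ : V × V := (v, (f u).1) with he₀
      have he₀F : e₀ ∈ F := by
        rw [hF, Finset.mem_image]
        exact ⟨u, Finset.mem_univ u, rfl⟩
      have he₀E : e₀ ∈ E := hFE he₀F
      have hsub : (E \ F).filter (fun e => e.1 = v) ⊆
          (E.filter (fun e => e.1 = v)).erase e₀ := by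
        intro e he
        rw [Finset.mem_filter, Finset.mem_sdiff] at he
        rw [Finset.mem_erase, Finset.mem_filter]
        refine ⟨?_, he.1.1, he.2⟩
        intro heq
        exact he.1.2 (heq ▸ he₀F)
      have : ((E.filter (fun e => e.1 = v)).erase e₀).card =
          (E.filter (fun e => e.1 = v)).card - 1 := by
        apply Finset.card_erase_of_mem
        rw [Finset.mem_filter]
        exact ⟨he₀E, rfl⟩
      calc outDeg (E \ F) v ≤ ((E.filter (fun e => e.1 = v)).erase e₀).card :=
            Finset.card_le_card hsub
        _ = outDeg E v - 1 := this
        _ = D - 1 := by rw [h]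
    · have h1 : outDeg E v ≤ D - 1 := by
        have := hD v
        omega
      refine le_trans ?_ h1
      exact Finset.card_le_card (Finset.filter_subset_filter _ (Finset.sdiff_subset))
  · -- out-degree of F
    intro v
    rw [outDeg]
    apply Finset.card_le_one.mpr
    intro a ha b hb
    rw [Finset.mem_filter, hF, Finset.mem_image] at ha hb
    obtain ⟨⟨ua, _, rfl⟩, ha1⟩ := ha
    obtain ⟨⟨ub, _, rfl⟩, hb1⟩ := hb
    have : ua = ub := Subtype.ext (by simp only at ha1 hb1; rw [ha1, hb1])
    rw [this]
  · -- total degree of F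
    intro v
    have hout : outDeg F v ≤ 1 := by
      rw [outDeg]
      apply Finset.card_le_one.mpr
      intro a ha b hb
      rw [Finset.mem_filter, hF, Finset.mem_image] at ha hb
      obtain ⟨⟨ua, _, rfl⟩, ha1⟩ := ha
      obtain ⟨⟨ub, _, rfl⟩, hb1⟩ := hb
      have : ua = ub := Subtype.ext (by simp only at ha1 hb1; rw [ha1, hb1])
      rw [this]
    have hin : inDeg F v ≤ c := by
      set U : Finset ι := Finset.univ.filter (fun u : ι => (f u).1 = v) with hU
      have himg : F.filter (fun e => e.2 = v) ⊆
          U.image (fun u : ι => ((u.1 : V), (f u).1)) := by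
        intro e he
        rw [Finset.mem_filter, hF, Finset.mem_image] at he
        obtain ⟨⟨u, _, rfl⟩, h2⟩ := he
        rw [Finset.mem_image]
        refine ⟨u, ?_, rfl⟩
        rw [hU, Finset.mem_filter]
        exact ⟨Finset.mem_univ u, h2⟩
      have h1 : inDeg F v ≤ U.card := by
        rw [inDeg]
        calc (F.filter (fun e => e.2 = v)).card
            ≤ (U.image (fun u : ι => ((u.1 : V), (f u).1))).card :=
              Finset.card_le_card himg
          _ ≤ U.card := Finset.card_image_le
      have h2 : U.card ≤ c := by
        have : U.card ≤ (Finset.univ : Finset (Fin c)).card := by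
          apply Finset.card_le_card_of_injOn (fun u : ι => (f u).2)
          · intro a _; exact Finset.mem_univ _
          · intro a ha b hb hab
            rw [hU, Finset.coe_filter] at ha hb
            simp only [Set.mem_setOf_eq] at ha hb
            apply hfinj
            apply Prod.ext
            · rw [ha.2, hb.2]
            · exact hab
        rwa [Finset.card_univ, Fintype.card_fin] at this
      exact le_trans h1 h2
    calc outDeg F v + inDeg F v ≤ 1 + c := Nat.add_le_add hout hin
      _ ≤ k := by omega
end

section
/- Let J be a finite digraph with maximum out-degree exactly D where D > m(J), let L be the set of vertices of out-degree exactly D, let R = N⁺(L) be the out-neighbourhood of L, and let c = ⌈m(J)/(D - m(J))⌉. In the bipartite graph A with parts L and R × {1,...,c}, where u ∈ L is adjacent to (v,i) whenever uv is an edge of J, Hall's condition holds: every subset U ⊆ L satisfies |N_A(U)| ≥ |U|. -/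
open Finset
open scoped Classical

/-- Hall's condition in the auxiliary bipartite graph. With `L` the set of
vertices of out-degree exactly `D`, `c = ⌈m(J)/(D - m(J))⌉`, and `A` the bipartite graph between
`L` and `N⁺(L) × [c]`, every `U ⊆ L` satisfies `|N_A(U)| = |N⁺(U) × [c]| ≥ |U|`. -/
theorem stmt_1 {V : Type*} [Fintype V] [Nonempty V] (E : Finset (V × V)) (D : ℕ)
    (hD : ∀ v, outDeg E v ≤ D) (hDex : ∃ v, outDeg E v = D)
    (hm : dMaxDensity E < (D : ℝ))
    (c : ℕ) (hc : c = ⌈dMaxDensity E / ((D : ℝ) - dMaxDensity E)⌉₊)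
    (U : Finset V) (hU : ∀ u ∈ U, outDeg E u = D) :
    U.card ≤ (((Finset.univ.filter (fun v => ∃ u ∈ U, (u, v) ∈ E)) ×ˢ
      (Finset.univ : Finset (Fin c)))).card := by
  classical
  set m := dMaxDensity E with hmdef
  set N : Finset V := Finset.univ.filter (fun v => ∃ u ∈ U, (u, v) ∈ E) with hN
  rw [Finset.card_product, Finset.card_univ, Fintype.card_fin]
  rcases U.eq_empty_or_nonempty with hUe | hUne
  · simp [hUe]
  -- m ≥ 0
  have hm0 : 0 ≤ m := by
    have := Finset.le_sup' (f := fun S : Finset V => (dEdgesIn E S : ℝ) / (S.card : ℝ))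
      (s := (Finset.univ : Finset (Finset V)).filter (fun S => S.Nonempty))
      (b := (Finset.univ : Finset V)) (by simp [Finset.univ_nonempty])
    refine le_trans ?_ this
    positivity
  -- density bound on S = U ∪ N
  set S : Finset V := U ∪ N with hS
  have hSne : S.Nonempty := hUne.mono Finset.subset_union_left
  have hdens : (dEdgesIn E S : ℝ) / (S.card : ℝ) ≤ m := by
    exact Finset.le_sup' (f := fun S : Finset V => (dEdgesIn E S : ℝ) / (S.card : ℝ))
      (by simp [hSne])
  have hScard0 : (0 : ℝ) < (S.card : ℝ) := by
    exact_mod_cast Finset.card_pos.mpr hSne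
  have hdens' : (dEdgesIn E S : ℝ) ≤ m * S.card := by
    rw [div_le_iff₀ hScard0] at hdens; linarith
  -- edge count: D * |U| ≤ dEdgesIn E S
  have hsum : (E.filter (fun e => e.1 ∈ U)).card = ∑ u ∈ U, outDeg E u := by
    have hfib := Finset.card_eq_sum_card_fiberwise
      (s := E.filter (fun e => e.1 ∈ U)) (t := U) (f := fun e => e.1)
      (fun e he => (Finset.mem_filter.mp he).2)
    rw [hfib]
    refine Finset.sum_congr rfl fun u hu => ?_
    unfold outDeg
    congr 1
    rw [Finset.filter_filter]
    refine Finset.filter_congr fun e _ => ?_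
    constructor
    · rintro ⟨_, h⟩; exact h
    · rintro h; exact ⟨h ▸ hu, h⟩
  have hedge : D * U.card ≤ dEdgesIn E S := by
    have hsub : E.filter (fun e => e.1 ∈ U) ⊆ E.filter (fun e => e.1 ∈ S ∧ e.2 ∈ S) := by
      intro e he
      rw [Finset.mem_filter] at he ⊢
      refine ⟨he.1, Finset.mem_union.mpr (Or.inl he.2), Finset.mem_union.mpr (Or.inr ?_)⟩
      simp only [hN, Finset.mem_filter, Finset.mem_univ, true_and]
      exact ⟨e.1, he.2, by simpa using he.1⟩
    calc D * U.card = ∑ u ∈ U, outDeg E u := by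
          rw [Finset.sum_congr rfl hU, Finset.sum_const, smul_eq_mul, mul_comm]
      _ = (E.filter (fun e => e.1 ∈ U)).card := hsum.symm
      _ ≤ dEdgesIn E S := Finset.card_le_card hsub
  -- combine
  have hScard : (S.card : ℝ) ≤ U.card + N.card := by
    exact_mod_cast Finset.card_union_le U N
  have hmain : ((D : ℝ) - m) * U.card ≤ m * N.card := by
    have h1 : (D : ℝ) * U.card ≤ (dEdgesIn E S : ℝ) := by exact_mod_cast hedge
    nlinarith [hm0, hdens', hScard]
  have hDm : (0 : ℝ) < (D : ℝ) - m := by linarith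
  have hcge : m / ((D : ℝ) - m) ≤ (c : ℝ) := hc ▸ Nat.le_ceil _
  have : (U.card : ℝ) ≤ (N.card : ℝ) * c := by
    have h2 : (U.card : ℝ) ≤ m / ((D : ℝ) - m) * N.card := by
      rw [div_mul_eq_mul_div, le_div_iff₀ hDm]; linarith
    calc (U.card : ℝ) ≤ m / ((D : ℝ) - m) * N.card := h2
      _ ≤ (c : ℝ) * N.card := by
          apply mul_le_mul_of_nonneg_right hcge (by positivity)
      _ = (N.card : ℝ) * c := mul_comm _ _
  exact_mod_cast this
end

section
/- Let H be a graph with at least 3 vertices whose 2-density d₂(H) = (e(H)-1)/(v(H)-2) satisfies d₂(H) ≥ k + ε for an integer k ≥ 1 and ε ∈ [0,1). Then one must delete at least C(k-1,2) + ε·(v(H) - 2) edges from H to obtain a k-degenerate spanning subgraph; that is, every k-degenerate subgraph H' of H satisfies e(H) - e(H') ≥ (k-1)(k-2)/2 + ε·(v(H) - 2). -/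
open Finset
open scoped Classical

variable {V : Type*}

/-- Number of edges of the graph `G` lying inside the vertex set `S`. -/
noncomputable def edgesIn [Fintype V] (G : SimpleGraph V) (S : Finset V) : ℕ :=
  (G.edgeFinset.filter (fun e => ∀ v ∈ e, v ∈ S)).card

/-- The maximum density `m(G) = max {e(G')/v(G') : ∅ ≠ G' ⊆ G}` of a finite graph. -/
noncomputable def maxDensity [Fintype V] [Nonempty V] (G : SimpleGraph V) : ℝ :=
  ((Finset.univ : Finset (Finset V)).filter (fun S => S.Nonempty)).sup'
    ⟨Finset.univ, by simp [Finset.univ_nonempty]⟩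
    (fun S => (edgesIn G S : ℝ) / (S.card : ℝ))

/-- The maximum 2-density `m₂(G)`. -/
noncomputable def max2Density [Fintype V] (G : SimpleGraph V) : ℝ :=
  (insert ((1 : ℝ) / 2)
    (((Finset.univ : Finset (Finset V)).filter (fun S => 3 ≤ S.card)).image
      (fun S => ((edgesIn G S : ℝ) - 1) / ((S.card : ℝ) - 2)))).sup'
    (Finset.insert_nonempty _ _) id

/-- Degree of `v` in the subgraph of `G` induced on `S`. -/
noncomputable def degIn [Fintype V] (G : SimpleGraph V) (S : Finset V) (v : V) : ℕ :=
  (S.filter (fun u => G.Adj v u)).card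

/-- A graph is `d`-degenerate if every nonempty (induced) subgraph has a vertex of degree at most `d`. -/
def Degenerate [Fintype V] (d : ℕ) (G : SimpleGraph V) : Prop :=
  ∀ S : Finset V, S.Nonempty → ∃ v ∈ S, degIn G S v ≤ d

lemma degIn_le_card [Fintype V] (G : SimpleGraph V) (S : Finset V) (v : V) (hv : v ∈ S) :
    degIn G S v ≤ S.card - 1 := by
  have hsub : S.filter (fun u => G.Adj v u) ⊆ S.erase v := by
    intro u hu
    simp only [mem_filter] at hu
    exact mem_erase.2 ⟨fun h => G.irrefl (h ▸ hu.2), hu.1⟩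
  calc degIn G S v ≤ (S.erase v).card := card_le_card hsub
    _ = S.card - 1 := card_erase_of_mem hv

lemma edgesIn_erase_le [Fintype V] (G : SimpleGraph V) (S : Finset V) (v : V) :
    edgesIn G S ≤ edgesIn G (S.erase v) + degIn G S v := by
  classical
  set A := G.edgeFinset.filter (fun e => ∀ w ∈ e, w ∈ S) with hA
  have hsplit : (A.filter (fun e => v ∈ e)).card + (A.filter (fun e => ¬ v ∈ e)).card
      = A.card := Finset.card_filter_add_card_filter_not _
  have h1 : A.filter (fun e => ¬ v ∈ e) ⊆
      G.edgeFinset.filter (fun e => ∀ w ∈ e, w ∈ S.erase v) := by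
    intro e he
    simp only [hA, mem_filter] at he ⊢
    refine ⟨he.1.1, fun w hw => mem_erase.2 ⟨?_, he.1.2 w hw⟩⟩
    intro h; exact he.2 (h ▸ hw)
  have h2 : A.filter (fun e => v ∈ e) ⊆
      (S.filter (fun u => G.Adj v u)).image (fun u => s(v, u)) := by
    intro e he
    simp only [hA, mem_filter] at he
    obtain ⟨b, rfl⟩ := Sym2.mem_iff_exists.1 he.2
    have hadj : G.Adj v b := by
      have := he.1.1
      rwa [SimpleGraph.mem_edgeFinset, SimpleGraph.mem_edgeSet] at this
    refine Finset.mem_image.2 ⟨b, Finset.mem_filter.2 ⟨?_, hadj⟩, rfl⟩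
    exact he.1.2 b (Sym2.mem_mk_right v b)
  have := card_le_card h1
  have h2' : (A.filter (fun e => v ∈ e)).card ≤ degIn G S v :=
    le_trans (card_le_card h2) (Finset.card_image_le)
  have hAcard : edgesIn G S = A.card := rfl
  have hBcard : edgesIn G (S.erase v)
      = (G.edgeFinset.filter (fun e => ∀ w ∈ e, w ∈ S.erase v)).card := rfl
  omega

lemma edgesIn_le_choose [Fintype V] (G : SimpleGraph V) (S : Finset V) :
    edgesIn G S ≤ S.card.choose 2 := by
  classical
  induction S using Finset.strongInduction with
  | _ S ih =>
    rcases S.eq_empty_or_nonempty with rfl | ⟨v, hv⟩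
    · have : edgesIn G ∅ = 0 := by
        unfold edgesIn
        rw [Finset.card_eq_zero, Finset.filter_eq_empty_iff]
        intro e _
        push_neg
        exact ⟨e.out.1, Sym2.out_fst_mem e, by simp⟩
      simp [this]
    · have hcard : 1 ≤ S.card := Finset.card_pos.2 ⟨v, hv⟩
      obtain ⟨m, hm⟩ : ∃ m, S.card = m + 1 := ⟨S.card - 1, by omega⟩
      have hih := ih (S.erase v) (Finset.erase_ssubset hv)
      have h1 := edgesIn_erase_le G S v
      have h2 := degIn_le_card G S v hv
      rw [card_erase_of_mem hv] at hih
      have hchoose : S.card.choose 2 = (S.card - 1).choose 2 + (S.card - 1) := by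
        rw [hm]
        simp [Nat.choose_succ_succ, Nat.choose_one_right, Nat.add_comm]
      omega

lemma degenerate_edgesIn_bound [Fintype V] (k : ℕ) (G : SimpleGraph V)
    (hdeg : Degenerate k G) :
    ∀ S : Finset V, k + 1 ≤ S.card → 2 * edgesIn G S + k * (k + 1) ≤ 2 * k * S.card := by
  classical
  intro S
  induction S using Finset.strongInduction with
  | _ S ih =>
    intro hS
    rcases eq_or_lt_of_le hS with heq | hlt
    · -- S.card = k + 1
      have h := edgesIn_le_choose G S
      have hc : S.card.choose 2 * 2 = S.card * (S.card - 1) := by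
        rw [Nat.choose_two_right]
        exact Nat.div_mul_cancel (Nat.even_mul_pred_self S.card).two_dvd
      rw [← heq] at hc h
      have hc' : (k + 1) - 1 = k := by omega
      rw [hc'] at hc
      nlinarith
    · obtain ⟨v, hv, hdv⟩ := hdeg S (Finset.card_pos.1 (by omega))
      have h1 := edgesIn_erase_le G S v
      have h2 := ih (S.erase v) (Finset.erase_ssubset hv)
        (by rw [card_erase_of_mem hv]; omega)
      rw [card_erase_of_mem hv] at h2
      have hmul : 2 * k * (S.card - 1) + 2 * k = 2 * k * S.card := by
        have : S.card - 1 + 1 = S.card := by omega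
        calc 2 * k * (S.card - 1) + 2 * k = 2 * k * (S.card - 1 + 1) := by ring
          _ = 2 * k * S.card := by rw [this]
      nlinarith

/-- If `d₂(H) ≥ k + ε` then every `k`-degenerate subgraph `H'` of `H` satisfies
`e(H) - e(H') ≥ (k-1)(k-2)/2 + ε (v(H) - 2)`. -/
theorem stmt_8 [Fintype V] (H H' : SimpleGraph V) (hcard : 3 ≤ Fintype.card V)
    (k : ℕ) (hk : 1 ≤ k) (ε : ℝ) (hε0 : 0 ≤ ε) (hε1 : ε < 1)
    (hd2 : (k : ℝ) + ε ≤ ((H.edgeFinset.card : ℝ) - 1) / ((Fintype.card V : ℝ) - 2))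
    (hsub : H' ≤ H) (hdeg : Degenerate k H') :
    ((k : ℝ) - 1) * ((k : ℝ) - 2) / 2 + ε * ((Fintype.card V : ℝ) - 2)
      ≤ (H.edgeFinset.card : ℝ) - (H'.edgeFinset.card : ℝ) := by
  classical
  set n := Fintype.card V with hn
  have hn3 : (3 : ℝ) ≤ (n : ℝ) := by exact_mod_cast hcard
  have hn2 : (0 : ℝ) < (n : ℝ) - 2 := by linarith
  -- from hd2
  have hE : ((k : ℝ) + ε) * ((n : ℝ) - 2) ≤ (H.edgeFinset.card : ℝ) - 1 :=
    (le_div_iff₀ hn2).1 hd2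
  -- e(H) ≤ n choose 2, hence 2 e(H) ≤ n (n-1)
  have hmaxN : 2 * H.edgeFinset.card ≤ n * (n - 1) := by
    have h1 : H.edgeFinset.card ≤ n.choose 2 := by
      simpa [hn] using SimpleGraph.card_edgeFinset_le_card_choose_two (G := H)
    have h2 : n.choose 2 * 2 = n * (n - 1) := by
      rw [Nat.choose_two_right]
      exact Nat.div_mul_cancel (Nat.even_mul_pred_self n).two_dvd
    omega
  have hmaxR : 2 * (H.edgeFinset.card : ℝ) ≤ (n : ℝ) * ((n : ℝ) - 1) := by
    have h1 : ((2 * H.edgeFinset.card : ℕ) : ℝ) ≤ ((n * (n - 1) : ℕ) : ℝ) := by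
      exact_mod_cast hmaxN
    have h2 : ((n - 1 : ℕ) : ℝ) = (n : ℝ) - 1 := by
      have : 1 ≤ n := by omega
      push_cast [this]; ring
    push_cast at h1
    rw [h2] at h1
    linarith
  -- deduce k + 1 ≤ n
  have h2k : 2 * (k : ℝ) ≤ (n : ℝ) + 1 := by
    have h1 : 2 * (k : ℝ) * ((n : ℝ) - 2) ≤ ((n : ℝ) - 2) * ((n : ℝ) + 1) := by
      nlinarith [mul_nonneg hε0 (le_of_lt hn2)]
    have := (mul_le_mul_iff_of_pos_right hn2).1 (by linarith [h1] :
      2 * (k : ℝ) * ((n : ℝ) - 2) ≤ ((n : ℝ) + 1) * ((n : ℝ) - 2))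
    linarith [this]
  have hkn : k + 1 ≤ n := by
    have : 2 * k ≤ n + 1 := by exact_mod_cast h2k
    omega
  -- degenerate bound on H'
  have hH' : 2 * H'.edgeFinset.card + k * (k + 1) ≤ 2 * k * n := by
    have h := degenerate_edgesIn_bound k H' hdeg Finset.univ
      (by rw [Finset.card_univ]; exact hkn)
    have heq : edgesIn H' Finset.univ = H'.edgeFinset.card := by
      unfold edgesIn
      rw [Finset.filter_true_of_mem (fun e _ => fun v _ => Finset.mem_univ v)]
    rw [heq, Finset.card_univ] at h
    exact h
  have hH'R : 2 * (H'.edgeFinset.card : ℝ) + (k : ℝ) * ((k : ℝ) + 1)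
      ≤ 2 * (k : ℝ) * (n : ℝ) := by exact_mod_cast hH'
  nlinarith [hE, hH'R]
end

section
/- For every real m ≥ 18, with k = ⌊m⌋, K = ⌊2m⌋, and r = Σ_{i=k+2}^{K} ⌈i/(i - m)⌉, the inequality C(k-1, 2) > k + 2 + r holds, where C(k-1,2) = (k-1)(k-2)/2. -/
open Finset
open scoped Classical


/-- For `m ≥ 18`, `k = ⌊m⌋`, `K = ⌊2m⌋` and
`r = ∑_{i = k+2}^{K} ⌈i/(i - m)⌉`, one has `C(k-1, 2) > k + 2 + r`. -/
theorem stmt_10 (m : ℝ) (hm : 18 ≤ m) :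
    ⌊m⌋₊ + 2 + ∑ i ∈ Finset.Icc (⌊m⌋₊ + 2) ⌊2 * m⌋₊, ⌈(i : ℝ) / ((i : ℝ) - m)⌉₊
      < (⌊m⌋₊ - 1).choose 2 := by
  have hm0 : (0:ℝ) ≤ m := by linarith
  set k := ⌊m⌋₊ with hkdef
  have hk18 : 18 ≤ k := Nat.le_floor (by exact_mod_cast hm)
  have hk18R : (18:ℝ) ≤ (k:ℝ) := by exact_mod_cast hk18
  have hkm : (k:ℝ) ≤ m := Nat.floor_le hm0
  have hmk : m < (k:ℝ) + 1 := Nat.lt_floor_add_one m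
  have hK : ⌊2*m⌋₊ ≤ 2*k + 1 := by
    have h : ⌊2*m⌋₊ < 2*k+2 := by
      rw [Nat.floor_lt (by linarith)]
      push_cast; linarith
    omega
  -- per-term bound
  have hterm : ∀ i ∈ Finset.Icc (k+2) ⌊2*m⌋₊,
      (⌈(i : ℝ) / ((i : ℝ) - m)⌉₊ : ℝ) ≤ 2 + ((k:ℝ)+1)/((i:ℝ) - ((k:ℝ)+1)) := by
    intro i hi
    simp only [Finset.mem_Icc] at hi
    have hi2 : (k:ℝ) + 2 ≤ (i:ℝ) := by exact_mod_cast hi.1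
    have hpos : (0:ℝ) < (i:ℝ) - ((k:ℝ)+1) := by linarith
    have hposm : (0:ℝ) < (i:ℝ) - m := by linarith
    have hx0 : (0:ℝ) ≤ (i:ℝ)/((i:ℝ)-m) := by positivity
    have h1 : (⌈(i : ℝ) / ((i : ℝ) - m)⌉₊ : ℝ) < (i : ℝ) / ((i : ℝ) - m) + 1 :=
      Nat.ceil_lt_add_one hx0
    have h2 : (i : ℝ) / ((i : ℝ) - m) = 1 + m / ((i:ℝ) - m) := by field_simp; ring
    have h3 : m / ((i:ℝ) - m) ≤ ((k:ℝ)+1)/((i:ℝ) - ((k:ℝ)+1)) :=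
      div_le_div₀ (by positivity) (le_of_lt hmk) hpos (by linarith)
    linarith
  have hsum1 : (∑ i ∈ Finset.Icc (k+2) ⌊2*m⌋₊, (⌈(i : ℝ) / ((i : ℝ) - m)⌉₊:ℝ))
      ≤ ∑ i ∈ Finset.Icc (k+2) (2*k+1), (2 + ((k:ℝ)+1)/((i:ℝ) - ((k:ℝ)+1))) := by
    refine le_trans (Finset.sum_le_sum hterm) ?_
    refine Finset.sum_le_sum_of_subset_of_nonneg (Finset.Icc_subset_Icc_right hK) ?_
    intro i hi _
    simp only [Finset.mem_Icc] at hi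
    have hi2 : (k:ℝ) + 2 ≤ (i:ℝ) := by exact_mod_cast hi.1
    have hpos : (0:ℝ) < (i:ℝ) - ((k:ℝ)+1) := by linarith
    positivity
  have hre : ∑ i ∈ Finset.Icc (k+2) (2*k+1), (2 + ((k:ℝ)+1)/((i:ℝ) - ((k:ℝ)+1)))
      = ∑ j ∈ Finset.Icc 1 k, (2 + ((k:ℝ)+1)/(j:ℝ)) := by
    rw [show k+2 = (k+1)+1 from rfl, show 2*k+1 = (k+1)+k by ring,
      ← Finset.map_add_left_Icc, Finset.sum_map]
    refine Finset.sum_congr rfl fun j hj => ?_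
    simp only [addLeftEmbedding_apply]
    push_cast
    ring_nf
  have hsum2 : ∑ j ∈ Finset.Icc 1 k, (2 + ((k:ℝ)+1)/(j:ℝ))
      = 2*(k:ℝ) + ((k:ℝ)+1) * ∑ j ∈ Finset.Icc 1 k, ((j:ℝ))⁻¹ := by
    rw [Finset.sum_add_distrib, Finset.sum_const, Nat.card_Icc, Finset.mul_sum]
    simp only [div_eq_mul_inv]
    push_cast
    ring_nf
  have hharm : ∑ j ∈ Finset.Icc 1 k, ((j:ℝ))⁻¹ ≤ 1 + Real.log k := by
    have h1 := harmonic_le_one_add_log k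
    have h2 : ((harmonic k : ℚ):ℝ) = ∑ j ∈ Finset.Icc 1 k, ((j:ℝ))⁻¹ := by
      rw [harmonic_eq_sum_Icc]; push_cast; rfl
    linarith [h2 ▸ h1]
  have hlog18 : Real.log 18 ≤ 3 := by
    rw [Real.log_le_iff_le_exp (by norm_num)]
    have h := Real.exp_one_gt_d9
    have h3 : Real.exp 3 = Real.exp 1 * Real.exp 1 * Real.exp 1 := by
      rw [← Real.exp_add, ← Real.exp_add]; norm_num
    nlinarith [Real.exp_pos 1]
  have hlogk : Real.log k ≤ (k:ℝ)/18 + 2 := by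
    have hkpos : (0:ℝ) < (k:ℝ) := by linarith
    have h1 : Real.log ((k:ℝ)/18) ≤ (k:ℝ)/18 - 1 :=
      Real.log_le_sub_one_of_pos (by positivity)
    have h2 : Real.log (k:ℝ) = Real.log ((k:ℝ)/18) + Real.log 18 := by
      rw [← Real.log_mul (by positivity) (by norm_num)]
      norm_num
    linarith
  have hch : (((k-1).choose 2 : ℕ) : ℝ) = ((k:ℝ)-1) * ((k:ℝ)-2) / 2 := by
    rw [Nat.cast_choose_two]
    have h1 : ((k-1 : ℕ):ℝ) = (k:ℝ) - 1 := by
      have : 1 ≤ k := by omega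
      push_cast [this]; ring
    rw [h1]; ring
  rw [← Nat.cast_lt (α := ℝ)]
  push_cast [hch]
  have hlogpos : 0 ≤ Real.log k := Real.log_nonneg (by linarith)
  have hfinal : (2*(k:ℝ) + ((k:ℝ)+1) * (1 + Real.log k)) ≤
      2*(k:ℝ) + ((k:ℝ)+1) * (3 + (k:ℝ)/18) := by
    have := mul_le_mul_of_nonneg_left (by linarith : 1 + Real.log (k:ℝ) ≤ 3 + (k:ℝ)/18)
      (by linarith : (0:ℝ) ≤ (k:ℝ)+1)
    linarith
  have hr : (∑ i ∈ Finset.Icc (k+2) ⌊2*m⌋₊, (⌈(i : ℝ) / ((i : ℝ) - m)⌉₊:ℝ))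
      ≤ 2*(k:ℝ) + ((k:ℝ)+1) * (1 + Real.log k) := by
    rw [hre, hsum2] at hsum1
    nlinarith [hharm, hlogpos]
  nlinarith [hr, hfinal, sq_nonneg ((k:ℝ) - 18)]
end

section
/- For every real m > 0, with k = ⌊m⌋ and K = ⌊2m⌋, the sum r = Σ_{i=k+2}^{K} ⌈i/(i - m)⌉ satisfies r ≤ 2k + (k+1)(1 + log k) when k ≥ 2. -/
open Finset
open scoped Classical

lemma harm_le (n : ℕ) (hn : 1 ≤ n) :
    (∑ j ∈ Finset.Icc 1 n, (1:ℝ)/j) ≤ 1 + Real.log n := by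
  induction n with
  | zero => omega
  | succ n ih =>
    rcases Nat.eq_zero_or_pos n with h0 | h0
    · subst h0; simp
    · rw [Finset.sum_Icc_succ_top (by omega)]
      have hn1 : (0:ℝ) < n := by exact_mod_cast h0
      have hkey : (1:ℝ)/(n+1) ≤ Real.log (n+1) - Real.log n := by
        have hx : (0:ℝ) < (n:ℝ)/(n+1) := by positivity
        have := Real.log_le_sub_one_of_pos hx
        rw [Real.log_div (by positivity) (by positivity)] at this
        have h2 : (n:ℝ)/(n+1) - 1 = -(1/(n+1)) := by field_simp; ring
        linarith [this, h2 ▸ this]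
      have := ih h0
      push_cast
      linarith

/-- For `m > 0` with `k = ⌊m⌋ ≥ 2` and `K = ⌊2m⌋`, the sum
`r = ∑_{i = k+2}^{K} ⌈i/(i - m)⌉` satisfies `r ≤ 2k + (k+1)(1 + log k)`. -/
theorem stmt_11 (m : ℝ) (hm : 0 < m) (hk : 2 ≤ ⌊m⌋₊) :
    ((∑ i ∈ Finset.Icc (⌊m⌋₊ + 2) ⌊2 * m⌋₊, ⌈(i : ℝ) / ((i : ℝ) - m)⌉₊ : ℕ) : ℝ)
      ≤ 2 * (⌊m⌋₊ : ℝ) + ((⌊m⌋₊ : ℝ) + 1) * (1 + Real.log (⌊m⌋₊ : ℝ)) := by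
  set k := ⌊m⌋₊ with hkdef
  set K := ⌊2 * m⌋₊ with hKdef
  have hmk : (k : ℝ) ≤ m := Nat.floor_le hm.le
  have hmk1 : m < (k : ℝ) + 1 := Nat.lt_floor_add_one m
  have hK2k : K ≤ 2 * k + 1 := by
    have h2 : 2 * m < (2 * k + 2 : ℕ) := by push_cast; linarith
    have := (Nat.floor_lt (by positivity)).mpr h2
    omega
  have hKge : 2 * k ≤ K := Nat.le_floor (by push_cast; linarith)
  set n := K - (k + 1) with hndef
  have hn1 : 1 ≤ n := by omega
  have hnk : n ≤ k := by omega
  have hpt : ∀ i ∈ Finset.Icc (k + 2) K,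
      (⌈(i : ℝ) / ((i : ℝ) - m)⌉₊ : ℝ) ≤ 2 + ((k : ℝ) + 1) / ((i : ℝ) - ((k : ℝ) + 1)) := by
    intro i hi
    simp only [Finset.mem_Icc] at hi
    have hi2 : ((k : ℝ) + 2) ≤ (i : ℝ) := by exact_mod_cast hi.1
    have hpos : (0 : ℝ) < (i : ℝ) - ((k : ℝ) + 1) := by linarith
    have hposm : (0 : ℝ) < (i : ℝ) - m := by linarith
    have hx : (0 : ℝ) ≤ (i : ℝ) / ((i : ℝ) - m) := by positivity
    have h1 := (Nat.ceil_lt_add_one hx).le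
    have h2 : (i : ℝ) / ((i : ℝ) - m) = 1 + m / ((i : ℝ) - m) := by field_simp; ring
    have h3 : m / ((i : ℝ) - m) ≤ ((k : ℝ) + 1) / ((i : ℝ) - ((k : ℝ) + 1)) :=
      div_le_div₀ (by positivity) (by linarith) hpos (by linarith)
    linarith
  have hreindex : ∑ i ∈ Finset.Icc (k + 2) K, ((k : ℝ) + 1) / ((i : ℝ) - ((k : ℝ) + 1))
      = ∑ j ∈ Finset.Icc 1 n, ((k : ℝ) + 1) / (j : ℝ) := by
    apply Finset.sum_nbij' (fun i => i - (k + 1)) (fun j => j + (k + 1))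
    · intro i hi; simp only [Finset.mem_Icc] at *; omega
    · intro j hj; simp only [Finset.mem_Icc] at *; omega
    · intro i hi; simp only [Finset.mem_Icc] at hi; omega
    · intro j hj; simp only [Finset.mem_Icc] at hj; omega
    · intro i hi
      simp only [Finset.mem_Icc] at hi
      congr 1
      have : (k + 1 : ℕ) ≤ i := by omega
      push_cast [Nat.cast_sub this]
      ring
  calc ((∑ i ∈ Finset.Icc (k + 2) K, ⌈(i : ℝ) / ((i : ℝ) - m)⌉₊ : ℕ) : ℝ)
      ≤ ∑ i ∈ Finset.Icc (k + 2) K, (2 + ((k : ℝ) + 1) / ((i : ℝ) - ((k : ℝ) + 1))) := by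
        rw [Nat.cast_sum]; exact Finset.sum_le_sum hpt
    _ = 2 * (n : ℝ) + ((k : ℝ) + 1) * ∑ j ∈ Finset.Icc 1 n, 1 / (j : ℝ) := by
        rw [Finset.sum_add_distrib, Finset.sum_const, Nat.card_Icc, hreindex,
          Finset.mul_sum]
        have : K + 1 - (k + 2) = n := by omega
        rw [this]
        simp only [nsmul_eq_mul, mul_one_div]
        ring
    _ ≤ 2 * (k : ℝ) + ((k : ℝ) + 1) * (1 + Real.log (k : ℝ)) := by
        have h1 := harm_le n hn1
        have h2 : Real.log (n : ℝ) ≤ Real.log (k : ℝ) :=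
          Real.log_le_log (by exact_mod_cast hn1) (by exact_mod_cast hnk)
        have h3 : ((k : ℝ) + 1) * ∑ j ∈ Finset.Icc 1 n, 1 / (j : ℝ)
            ≤ ((k : ℝ) + 1) * (1 + Real.log (k : ℝ)) := by
          apply mul_le_mul_of_nonneg_left (by linarith) (by positivity)
        have h4 : (n : ℝ) ≤ (k : ℝ) := by exact_mod_cast hnk
        linarith
end
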